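/- Let X_k be the Wright-Fisher chain and suppose x ∈ Δ_{M,N} is a recurrent state with x(j) > 0 for some j ∈ S_M. Then the vertex e_j is a recurrent state belonging to the same closed communication class as x. -/
import Mathlib


open Finset

/-- The multinomial probability of producing count vector `w` (out of `N` trials)
with category probabilities `g`. -/
noncomputable def multinomialPMF {M : ℕ} (N : ℕ) (g : Fin M → ℝ) (w : Fin M → ℕ) : ℝ :=
  ((N.factorial : ℝ) / ∏ i, ((w i).factorial : ℝ)) * ∏ i, g i ^ w i

/-- One-step transition probability of the Wright-Fisher chain between count
vectors `z, w`. -/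
noncomputable def wfKernel {M : ℕ} (Γ : (Fin M → ℝ) → (Fin M → ℝ)) (N : ℕ)
    (z w : Fin M → ℕ) : ℝ :=
  multinomialPMF N (Γ fun i => (z i : ℝ) / N) w

/-- Accessibility: `w` can be reached from `z` in finitely many steps of the
Wright-Fisher chain, through valid states (count vectors summing to `N`). -/
def WFAccessible {M : ℕ} (Γ : (Fin M → ℝ) → (Fin M → ℝ)) (N : ℕ) :
    (Fin M → ℕ) → (Fin M → ℕ) → Prop :=
  Relation.ReflTransGen fun z w => (∑ i, w i = N) ∧ 0 < wfKernel Γ N z w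

/-- A state of a finite Markov chain is recurrent iff every state accessible
from it can access it back (standard characterization for finite chains). -/
def WFRecurrent {M : ℕ} (Γ : (Fin M → ℝ) → (Fin M → ℝ)) (N : ℕ)
    (z : Fin M → ℕ) : Prop :=
  ∀ w, WFAccessible Γ N z w → WFAccessible Γ N w z

/-- If `z` is a recurrent state of the Wright-Fisher chain with `z j > 0`, then
the vertex `e_j` (counts `N·e_j`) is recurrent and belongs to the same closed
communication class as `z`. -/
lemma aux_simplex_mem {M N : ℕ} (hN : 0 < N) (u : Fin M → ℕ) (hu : ∑ i, u i = N) :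
    (fun i => (u i : ℝ) / N) ∈ stdSimplex ℝ (Fin M) := by
  constructor
  · intro i; positivity
  · rw [← Finset.sum_div, ← Nat.cast_sum, hu]
    field_simp

lemma aux_pmf_single {M N : ℕ} (g : Fin M → ℝ) (j : Fin M) :
    multinomialPMF N g (Pi.single j N) = g j ^ N := by
  unfold multinomialPMF
  have h1 : (∏ i, (((Pi.single j N : Fin M → ℕ) i).factorial : ℝ)) = N.factorial := by
    rw [Finset.prod_eq_single j]
    · simp
    · intro i _ hij; simp [Pi.single_eq_of_ne hij]
    · simp
  have h2 : (∏ i, g i ^ (Pi.single j N : Fin M → ℕ) i) = g j ^ N := by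
    rw [Finset.prod_eq_single j]
    · simp
    · intro i _ hij; simp [Pi.single_eq_of_ne hij]
    · simp
  rw [h1, h2]
  have : (N.factorial : ℝ) ≠ 0 := Nat.cast_ne_zero.mpr N.factorial_ne_zero
  field_simp

theorem recurrent_state_communicates_with_vertex {M N : ℕ} (hN : 0 < N)
    (Γ : (Fin M → ℝ) → (Fin M → ℝ))
    (hmap : ∀ x ∈ stdSimplex ℝ (Fin M), Γ x ∈ stdSimplex ℝ (Fin M))
    (z : Fin M → ℕ) (hz : ∑ i, z i = N)
    (hrec : WFRecurrent Γ N z) (j : Fin M) (hj : 0 < z j) :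
    WFRecurrent Γ N (Pi.single j N) ∧
      WFAccessible Γ N z (Pi.single j N) ∧
      WFAccessible Γ N (Pi.single j N) z := by
  have hsum_single : ∀ k : Fin M, ∑ i, (Pi.single k N : Fin M → ℕ) i = N := by
    intro k; simp
  -- step 1: find some state reachable from z in one step
  have hg0 := hmap _ (aux_simplex_mem hN z hz)
  obtain ⟨i0, hi0⟩ : ∃ i, 0 < Γ (fun i => (z i : ℝ) / N) i := by
    by_contra h
    push_neg at h
    have hle : ∑ i, Γ (fun i => (z i : ℝ) / N) i ≤ 0 := Finset.sum_nonpos fun i _ => h i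
    rw [hg0.2] at hle
    linarith
  have hstep1 : (fun a b => (∑ i, b i = N) ∧ 0 < wfKernel Γ N a b) z (Pi.single i0 N) := by
    refine ⟨hsum_single i0, ?_⟩
    rw [wfKernel, aux_pmf_single]
    exact pow_pos hi0 N
  have acc1 : WFAccessible Γ N z (Pi.single i0 N) := Relation.ReflTransGen.single hstep1
  have back1 : WFAccessible Γ N (Pi.single i0 N) z := hrec _ acc1
  -- extract y with z ⟶* y and a positive one-step kernel y → z
  obtain ⟨y, hyacc, hystep⟩ :
      ∃ y, WFAccessible Γ N z y ∧ ((∑ i, z i = N) ∧ 0 < wfKernel Γ N y z) := by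
    rcases Relation.ReflTransGen.cases_tail back1 with h | ⟨y, hy1, hy2⟩
    · exact ⟨z, Relation.ReflTransGen.refl, by rw [h] at hstep1 ⊢; exact hstep1⟩
    · exact ⟨y, acc1.trans hy1, hy2⟩
  -- y is a valid state
  have hysum : ∑ i, y i = N := by
    rcases Relation.ReflTransGen.cases_tail hyacc with h | ⟨w, _, hw2⟩
    · rw [h]; exact hz
    · exact hw2.1
  have hgy := hmap _ (aux_simplex_mem hN y hysum)
  set g := Γ (fun i => (y i : ℝ) / N) with hg
  -- from positivity of kernel y → z and z j > 0, get g j > 0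
  have hgj : 0 < g j := by
    rcases lt_or_eq_of_le (hgy.1 j) with h | h
    · exact h
    · exfalso
      have : wfKernel Γ N y z = 0 := by
        rw [wfKernel, multinomialPMF, ← hg]
        have : ∏ i, g i ^ z i = 0 :=
          Finset.prod_eq_zero (Finset.mem_univ j) (by rw [← h]; exact zero_pow hj.ne')
        rw [this, mul_zero]
      rw [this] at hystep
      exact lt_irrefl 0 hystep.2
  -- so y → e_j in one step
  have hstepE : (fun a b => (∑ i, b i = N) ∧ 0 < wfKernel Γ N a b) y (Pi.single j N) := by
    refine ⟨hsum_single j, ?_⟩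
    rw [wfKernel, aux_pmf_single, ← hg]
    exact pow_pos hgj N
  have accE : WFAccessible Γ N z (Pi.single j N) :=
    hyacc.trans (Relation.ReflTransGen.single hstepE)
  have backE : WFAccessible Γ N (Pi.single j N) z := hrec _ accE
  refine ⟨?_, accE, backE⟩
  intro w hw
  have : WFAccessible Γ N z w := accE.trans hw
  exact (hrec _ this).trans accE
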